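/- Assume the set-monotonicity condition μ({ω : M1(ω) ∉ m_a and M0(ω) ∈ m_a}) = 0 and that P(Y ∉ y_a, M ∈ m_a | X=0) − P(Y ∉ y_a, M ∈ m_a | X=1) > 0. Then μ({M1 ∈ m_a} ∩ {M0 ∈ m_a}) > 0 and [P(Y ∉ y_a, M ∈ m_a | X=0) − P(Y ∉ y_a, M ∈ m_a | X=1)] / P(M ∈ m_a | X=0) ≤ [μ(Y1 ∈ y_a, Y0 ∉ y_a, M1 ∈ m_a, M0 ∈ m_a) − μ(Y1 ∉ y_a, Y0 ∈ y_a, M1 ∈ m_a, M0 ∈ m_a)] / μ({M1 ∈ m_a} ∩ {M0 ∈ m_a}); moreover the right-hand side equals P(Y1 ∈ y_a, Y0 ∉ y_a | M1 ∈ m_a, M0 ∈ m_a) − P(Y1 ∉ y_a, Y0 ∈ y_a | M1 ∈ m_a, M0 ∈ m_a), where P(A | B) := μ(A ∩ B)/μ(B). -/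

import Mathlib

open MeasureTheory ProbabilityTheory
open scoped ENNReal

noncomputable def condP {Ω : Type*} [MeasurableSpace Ω] (μ : Measure Ω)
    (A B : Set Ω) : ℝ :=
  (μ (A ∩ B)).toReal / (μ B).toReal

lemma condP_congr {Ω : Type*} [MeasurableSpace Ω] (μ : Measure Ω)
    {A A' B : Set Ω} (h : A ∩ B = A' ∩ B) : condP μ A B = condP μ A' B := by
  unfold condP; rw [h]

lemma condP_of_indep {Ω α : Type*} [MeasurableSpace Ω] [MeasurableSpace α]
    (μ : Measure Ω) [IsProbabilityMeasure μ] {X : Ω → ℕ} {V : Ω → α}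
    (hindep : IndepFun X V μ) {x : ℕ} (hx : μ (X ⁻¹' {x}) ≠ 0)
    {B : Set α} (hB : MeasurableSet B) :
    condP μ (V ⁻¹' B) (X ⁻¹' {x}) = (μ (V ⁻¹' B)).toReal := by
  have h := hindep.measure_inter_preimage_eq_mul {x} B (measurableSet_singleton x) hB
  unfold condP
  rw [Set.inter_comm, h, ENNReal.toReal_mul, mul_comm, mul_div_assoc, div_self, mul_one]
  exact ENNReal.toReal_ne_zero.mpr ⟨hx, measure_ne_top μ _⟩

theorem statement18
    {Ω : Type*} [MeasurableSpace Ω] (μ : Measure Ω) [IsProbabilityMeasure μ]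
    {ny nm : ℕ} (hny : 0 < ny) (hnm : 0 < nm)
    (Y1 Y0 Y : Ω → (Fin ny → ℝ)) (M1 M0 M : Ω → (Fin nm → ℝ)) (X : Ω → ℕ)
    (hY1meas : Measurable Y1) (hY0meas : Measurable Y0)
    (hM1meas : Measurable M1) (hM0meas : Measurable M0)
    (hXmeas : Measurable X) (hXbin : ∀ ω, X ω ≤ 1)
    (hXpos : 0 < μ {ω | X ω = 1}) (hXlt : μ {ω | X ω = 1} < 1)
    (hindep : IndepFun X (fun ω => (Y1 ω, Y0 ω, M1 ω, M0 ω)) μ)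
    (hYcons1 : ∀ ω, X ω = 1 → Y ω = Y1 ω)
    (hYcons0 : ∀ ω, X ω = 0 → Y ω = Y0 ω)
    (hMcons1 : ∀ ω, X ω = 1 → M ω = M1 ω)
    (hMcons0 : ∀ ω, X ω = 0 → M ω = M0 ω)
    (ya : Set (Fin ny → ℝ)) (ma : Set (Fin nm → ℝ))
    (hya : MeasurableSet ya) (hma : MeasurableSet ma)
    (hmono : μ {ω | M1 ω ∉ ma ∧ M0 ω ∈ ma} = 0)
    (hemp : condP μ {ω | Y ω ∉ ya ∧ M ω ∈ ma} {ω | X ω = 0}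
        - condP μ {ω | Y ω ∉ ya ∧ M ω ∈ ma} {ω | X ω = 1} > 0) :
    0 < μ ({ω | M1 ω ∈ ma} ∩ {ω | M0 ω ∈ ma}) ∧
    (condP μ {ω | Y ω ∉ ya ∧ M ω ∈ ma} {ω | X ω = 0}
        - condP μ {ω | Y ω ∉ ya ∧ M ω ∈ ma} {ω | X ω = 1})
      / condP μ {ω | M ω ∈ ma} {ω | X ω = 0}
      ≤ ((μ {ω | Y1 ω ∈ ya ∧ Y0 ω ∉ ya ∧ M1 ω ∈ ma ∧ M0 ω ∈ ma}).toReal - (μ {ω | Y1 ω ∉ ya ∧ Y0 ω ∈ ya ∧ M1 ω ∈ ma ∧ M0 ω ∈ ma}).toReal)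
        / (μ ({ω | M1 ω ∈ ma} ∩ {ω | M0 ω ∈ ma})).toReal ∧
    ((μ {ω | Y1 ω ∈ ya ∧ Y0 ω ∉ ya ∧ M1 ω ∈ ma ∧ M0 ω ∈ ma}).toReal - (μ {ω | Y1 ω ∉ ya ∧ Y0 ω ∈ ya ∧ M1 ω ∈ ma ∧ M0 ω ∈ ma}).toReal)
      / (μ ({ω | M1 ω ∈ ma} ∩ {ω | M0 ω ∈ ma})).toReal
      = condP μ {ω | Y1 ω ∈ ya ∧ Y0 ω ∉ ya} {ω | M1 ω ∈ ma ∧ M0 ω ∈ ma}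
        - condP μ {ω | Y1 ω ∉ ya ∧ Y0 ω ∈ ya} {ω | M1 ω ∈ ma ∧ M0 ω ∈ ma} := by
  classical
  set V : Ω → (Fin ny → ℝ) × (Fin ny → ℝ) × (Fin nm → ℝ) × (Fin nm → ℝ) :=
    fun ω => (Y1 ω, Y0 ω, M1 ω, M0 ω) with hV
  -- nonvanishing of the conditioning events
  have hx1 : μ (X ⁻¹' {1}) ≠ 0 := hXpos.ne'
  have hx0 : μ (X ⁻¹' {0}) ≠ 0 := by
    intro h
    have hcover : (Set.univ : Set Ω) ⊆ X ⁻¹' {0} ∪ {ω | X ω = 1} := by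
      intro ω _
      rcases Nat.le_one_iff_eq_zero_or_eq_one.mp (hXbin ω) with h0 | h1
      · exact Or.inl h0
      · exact Or.inr h1
    have : (1 : ℝ≥0∞) ≤ μ {ω | X ω = 1} := by
      calc (1 : ℝ≥0∞) = μ Set.univ := (measure_univ).symm
        _ ≤ μ (X ⁻¹' {0} ∪ {ω | X ω = 1}) := measure_mono hcover
        _ ≤ μ (X ⁻¹' {0}) + μ {ω | X ω = 1} := measure_union_le _ _
        _ = μ {ω | X ω = 1} := by rw [h, zero_add]
    exact absurd hXlt (not_lt.mpr this)
  -- translate condP's via consistency and independence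
  have key0 : condP μ {ω | Y ω ∉ ya ∧ M ω ∈ ma} {ω | X ω = 0}
      = (μ {ω | Y0 ω ∉ ya ∧ M0 ω ∈ ma}).toReal := by
    have hB : MeasurableSet {p : (Fin ny → ℝ) × (Fin ny → ℝ) × (Fin nm → ℝ) × (Fin nm → ℝ) |
        p.2.1 ∉ ya ∧ p.2.2.2 ∈ ma} :=
      ((measurable_fst.comp measurable_snd) hya.compl).inter
        ((measurable_snd.comp (measurable_snd.comp measurable_snd)) hma)
    have e : {ω | Y ω ∉ ya ∧ M ω ∈ ma} ∩ {ω | X ω = 0}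
        = (V ⁻¹' {p | p.2.1 ∉ ya ∧ p.2.2.2 ∈ ma}) ∩ {ω | X ω = 0} := by
      ext ω
      simp only [Set.mem_inter_iff, Set.mem_setOf_eq, Set.mem_preimage, hV]
      constructor
      · rintro ⟨⟨h1, h2⟩, h3⟩
        exact ⟨⟨by rwa [← hYcons0 ω h3], by rwa [← hMcons0 ω h3]⟩, h3⟩
      · rintro ⟨⟨h1, h2⟩, h3⟩
        exact ⟨⟨by rwa [hYcons0 ω h3], by rwa [hMcons0 ω h3]⟩, h3⟩
    rw [condP_congr μ e]
    exact condP_of_indep μ hindep hx0 hB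
  have key1 : condP μ {ω | Y ω ∉ ya ∧ M ω ∈ ma} {ω | X ω = 1}
      = (μ {ω | Y1 ω ∉ ya ∧ M1 ω ∈ ma}).toReal := by
    have hB : MeasurableSet {p : (Fin ny → ℝ) × (Fin ny → ℝ) × (Fin nm → ℝ) × (Fin nm → ℝ) |
        p.1 ∉ ya ∧ p.2.2.1 ∈ ma} :=
      (measurable_fst hya.compl).inter
        ((measurable_fst.comp (measurable_snd.comp measurable_snd)) hma)
    have e : {ω | Y ω ∉ ya ∧ M ω ∈ ma} ∩ {ω | X ω = 1}
        = (V ⁻¹' {p | p.1 ∉ ya ∧ p.2.2.1 ∈ ma}) ∩ {ω | X ω = 1} := by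
      ext ω
      simp only [Set.mem_inter_iff, Set.mem_setOf_eq, Set.mem_preimage, hV]
      constructor
      · rintro ⟨⟨h1, h2⟩, h3⟩
        exact ⟨⟨by rwa [← hYcons1 ω h3], by rwa [← hMcons1 ω h3]⟩, h3⟩
      · rintro ⟨⟨h1, h2⟩, h3⟩
        exact ⟨⟨by rwa [hYcons1 ω h3], by rwa [hMcons1 ω h3]⟩, h3⟩
    rw [condP_congr μ e]
    exact condP_of_indep μ hindep hx1 hB
  have keym : condP μ {ω | M ω ∈ ma} {ω | X ω = 0}
      = (μ {ω | M0 ω ∈ ma}).toReal := by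
    have hB : MeasurableSet {p : (Fin ny → ℝ) × (Fin ny → ℝ) × (Fin nm → ℝ) × (Fin nm → ℝ) |
        p.2.2.2 ∈ ma} :=
      (measurable_snd.comp (measurable_snd.comp measurable_snd)) hma
    have e : {ω | M ω ∈ ma} ∩ {ω | X ω = 0}
        = (V ⁻¹' {p | p.2.2.2 ∈ ma}) ∩ {ω | X ω = 0} := by
      ext ω
      simp only [Set.mem_inter_iff, Set.mem_setOf_eq, Set.mem_preimage, hV]
      constructor
      · rintro ⟨h1, h3⟩
        exact ⟨by rwa [← hMcons0 ω h3], h3⟩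
      · rintro ⟨h1, h3⟩
        exact ⟨by rwa [hMcons0 ω h3], h3⟩
    rw [condP_congr μ e]
    exact condP_of_indep μ hindep hx0 hB
  -- measure decompositions
  set S : Set Ω := {ω | M1 ω ∈ ma} ∩ {ω | M0 ω ∈ ma} with hS
  set P : Set Ω := {ω | Y1 ω ∈ ya ∧ Y0 ω ∉ ya ∧ M1 ω ∈ ma ∧ M0 ω ∈ ma} with hP
  set Q : Set Ω := {ω | Y1 ω ∉ ya ∧ Y0 ω ∈ ya ∧ M1 ω ∈ ma ∧ M0 ω ∈ ma} with hQ
  set R : Set Ω := {ω | Y1 ω ∉ ya ∧ Y0 ω ∉ ya ∧ M1 ω ∈ ma ∧ M0 ω ∈ ma} with hR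
  have hT1 : MeasurableSet {ω | M1 ω ∈ ma} := hM1meas hma
  have hT0 : MeasurableSet {ω | M0 ω ∈ ma} := hM0meas hma
  have hTY1 : MeasurableSet {ω | Y1 ω ∈ ya} := hY1meas hya
  have hTY0 : MeasurableSet {ω | Y0 ω ∈ ya} := hY0meas hya
  have h1 : μ {ω | Y0 ω ∉ ya ∧ M0 ω ∈ ma} = μ P + μ R := by
    have d1 : μ ({ω | Y0 ω ∉ ya ∧ M0 ω ∈ ma} \ {ω | M1 ω ∈ ma}) = 0 := by
      refine measure_mono_null ?_ hmono
      rintro ω ⟨⟨_, h2⟩, h3⟩; exact ⟨h3, h2⟩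
    have step1 := measure_inter_add_diff (μ := μ) {ω | Y0 ω ∉ ya ∧ M0 ω ∈ ma} hT1
    rw [d1, add_zero] at step1
    have step2 := measure_inter_add_diff (μ := μ)
      ({ω | Y0 ω ∉ ya ∧ M0 ω ∈ ma} ∩ {ω | M1 ω ∈ ma}) hTY1
    have eP : ({ω | Y0 ω ∉ ya ∧ M0 ω ∈ ma} ∩ {ω | M1 ω ∈ ma}) ∩ {ω | Y1 ω ∈ ya} = P := by
      ext ω; simp only [Set.mem_inter_iff, Set.mem_setOf_eq, hP]; tauto
    have eR : ({ω | Y0 ω ∉ ya ∧ M0 ω ∈ ma} ∩ {ω | M1 ω ∈ ma}) \ {ω | Y1 ω ∈ ya} = R := by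
      ext ω; simp only [Set.mem_inter_iff, Set.mem_diff, Set.mem_setOf_eq, hR]; tauto
    rw [eP, eR] at step2
    rw [← step1, ← step2]
  have h2 : μ Q + μ R ≤ μ {ω | Y1 ω ∉ ya ∧ M1 ω ∈ ma} := by
    have step2 := measure_inter_add_diff (μ := μ)
      ({ω | Y1 ω ∉ ya ∧ M1 ω ∈ ma} ∩ {ω | M0 ω ∈ ma}) hTY0
    have eQ : ({ω | Y1 ω ∉ ya ∧ M1 ω ∈ ma} ∩ {ω | M0 ω ∈ ma}) ∩ {ω | Y0 ω ∈ ya} = Q := by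
      ext ω; simp only [Set.mem_inter_iff, Set.mem_setOf_eq, hQ]; tauto
    have eR : ({ω | Y1 ω ∉ ya ∧ M1 ω ∈ ma} ∩ {ω | M0 ω ∈ ma}) \ {ω | Y0 ω ∈ ya} = R := by
      ext ω; simp only [Set.mem_inter_iff, Set.mem_diff, Set.mem_setOf_eq, hR]; tauto
    rw [eQ, eR] at step2
    calc μ Q + μ R = μ ({ω | Y1 ω ∉ ya ∧ M1 ω ∈ ma} ∩ {ω | M0 ω ∈ ma}) := step2
      _ ≤ μ {ω | Y1 ω ∉ ya ∧ M1 ω ∈ ma} := measure_mono Set.inter_subset_left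
  have h3 : μ {ω | M0 ω ∈ ma} = μ S := by
    have d1 : μ ({ω | M0 ω ∈ ma} \ {ω | M1 ω ∈ ma}) = 0 := by
      refine measure_mono_null ?_ hmono
      rintro ω ⟨h2, h3⟩; exact ⟨h3, h2⟩
    have step1 := measure_inter_add_diff (μ := μ) {ω | M0 ω ∈ ma} hT1
    rw [d1, add_zero] at step1
    rw [← step1, hS, Set.inter_comm]
  -- to reals
  have hnt : ∀ (A : Set Ω), μ A ≠ ⊤ := fun A => measure_ne_top μ A
  have h1' : (μ {ω | Y0 ω ∉ ya ∧ M0 ω ∈ ma}).toReal = (μ P).toReal + (μ R).toReal := by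
    rw [h1, ENNReal.toReal_add (hnt P) (hnt R)]
  have h2' : (μ Q).toReal + (μ R).toReal ≤ (μ {ω | Y1 ω ∉ ya ∧ M1 ω ∈ ma}).toReal := by
    rw [← ENNReal.toReal_add (hnt Q) (hnt R)]
    exact (ENNReal.toReal_le_toReal (ENNReal.add_ne_top.mpr ⟨hnt Q, hnt R⟩) (hnt _)).mpr h2
  rw [key0, key1] at hemp
  rw [h1'] at hemp
  -- positivity of μ S
  have hpq : 0 < (μ P).toReal - (μ Q).toReal := by linarith
  have hPpos : 0 < (μ P).toReal := by
    have : (0:ℝ) ≤ (μ Q).toReal := ENNReal.toReal_nonneg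
    linarith
  have hSpos : 0 < μ S := by
    have hPS : P ⊆ S := by rintro ω ⟨_, _, hm1, hm0⟩; exact ⟨hm1, hm0⟩
    have : 0 < μ P := by
      by_contra h
      push_neg at h
      have : μ P = 0 := le_antisymm h zero_le
      rw [this] at hPpos; simp at hPpos
    exact lt_of_lt_of_le this (measure_mono hPS)
  have hsR : 0 < (μ S).toReal := ENNReal.toReal_pos hSpos.ne' (hnt S)
  refine ⟨hSpos, ?_, ?_⟩
  · rw [key0, key1, keym, h1', h3]
    rw [div_le_div_iff_of_pos_right hsR]
    linarith
  · have eP : {ω | Y1 ω ∈ ya ∧ Y0 ω ∉ ya} ∩ {ω | M1 ω ∈ ma ∧ M0 ω ∈ ma} = P := by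
      ext ω; simp only [Set.mem_inter_iff, Set.mem_setOf_eq, hP]; tauto
    have eQ : {ω | Y1 ω ∉ ya ∧ Y0 ω ∈ ya} ∩ {ω | M1 ω ∈ ma ∧ M0 ω ∈ ma} = Q := by
      ext ω; simp only [Set.mem_inter_iff, Set.mem_setOf_eq, hQ]; tauto
    have eS : {ω | M1 ω ∈ ma ∧ M0 ω ∈ ma} = S := by
      ext ω; simp only [Set.mem_inter_iff, Set.mem_setOf_eq, hS]
    unfold condP
    rw [eP, eQ, eS, sub_div]
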